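/- (FDIA residual stealthiness.) In the setting of Theorem 1: with H = U₁Σ₁Vᵀ (thin SVD), attack support sequence T, z_e ∈ ℝ^n feasible for ‖U_{1,T^c} z_e‖₂ ≤ ε/√(N−|T|), attack e with e_T = U_{1,T} z_e, e_{T^c} = 0, measurements y = Hx* + e, and decoded state x̂ = VΣ₁⁻¹(z* − z_e^⊥) where z* = Σ₁Vᵀx* and z_e^⊥ = argmin_z ‖U₁z + P[U_{1,T}; 0] z_e‖₁, the residual satisfies ‖y − Hx̂‖₁ ≤ √(N−|T|)·‖U_{1,T^c} z_e‖₂ ≤ ε, i.e., the detector with threshold ε does not fire. -/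
import Mathlib


/-- ℓ₁ norm on `ℝ^N`. -/
noncomputable def l1 {N : ℕ} (x : Fin N → ℝ) : ℝ := ∑ i, |x i|

/-- ℓ₂ (Euclidean) norm on `ℝ^N`. -/
noncomputable def l2 {N : ℕ} (x : Fin N → ℝ) : ℝ := Real.sqrt (∑ i, (x i) ^ 2)

/-- Restriction of a vector to an index set (zero outside the set). -/
def restr {N : ℕ} (S : Finset (Fin N)) (x : Fin N → ℝ) : Fin N → ℝ :=
  fun i => if i ∈ S then x i else 0

lemma l1_restr_le {N : ℕ} (S : Finset (Fin N)) (x : Fin N → ℝ) :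
    l1 (restr S x) ≤ Real.sqrt S.card * l2 (restr S x) := by
  have key : (∑ i, |restr S x i|) ^ 2 ≤ (S.card : ℝ) * ∑ i, (restr S x i) ^ 2 := by
    have h1 : ∑ i, |restr S x i| = ∑ i ∈ S, (1 : ℝ) * |restr S x i| := by
      rw [← Finset.sum_subset (Finset.subset_univ S)]
      · exact Finset.sum_congr rfl fun i _ => (one_mul _).symm
      · intro i _ hi; simp [restr, hi]
    have h2 : ∑ i, (restr S x i) ^ 2 = ∑ i ∈ S, |restr S x i| ^ 2 := by
      rw [← Finset.sum_subset (Finset.subset_univ S)]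
      · exact Finset.sum_congr rfl fun i _ => (sq_abs _).symm
      · intro i _ hi; simp [restr, hi]
    rw [h1, h2]
    calc (∑ i ∈ S, (1:ℝ) * |restr S x i|) ^ 2
        ≤ (∑ i ∈ S, (1:ℝ)^2) * ∑ i ∈ S, |restr S x i| ^ 2 :=
          Finset.sum_mul_sq_le_sq_mul_sq S _ _
      _ = (S.card : ℝ) * ∑ i ∈ S, |restr S x i| ^ 2 := by simp
  have hnonneg : 0 ≤ ∑ i, |restr S x i| := Finset.sum_nonneg fun i _ => abs_nonneg _
  have := Real.sqrt_le_sqrt key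
  rwa [Real.sqrt_sq hnonneg, Real.sqrt_mul (Nat.cast_nonneg _)] at this

/-- FDIA residual stealthiness. With thin SVD `H = U₁ M` (`M = Σ₁Vᵀ` invertible),
attack `e = restr T (U₁ z_e)` where `z_e` is feasible (`‖U_{1,Tᶜ} z_e‖₂ ≤ ε/√(N−|T|)`),
measurements `y = Hx* + e`, and decoded state `x̂` with `M x̂ = M x* − z⊥` where `z⊥`
minimizes `z ↦ ‖U₁ z + e‖₁`, the residual satisfies
`‖y − Hx̂‖₁ ≤ √(N−|T|)·‖U_{1,Tᶜ} z_e‖₂ ≤ ε`: the detector with threshold `ε` does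
not fire. -/
theorem stmt17 (N n : ℕ) (U1 : Matrix (Fin N) (Fin n) ℝ)
    (M : Matrix (Fin n) (Fin n) ℝ) (hM : IsUnit M.det)
    (H : Matrix (Fin N) (Fin n) ℝ) (hH : H = U1 * M)
    (T : Finset (Fin N)) (hTN : T.card < N)
    (ε : ℝ) (hε : 0 < ε) (ze : Fin n → ℝ)
    (hfeas : l2 (restr Tᶜ (U1.mulVec ze)) ≤ ε / Real.sqrt ((N : ℝ) - T.card))
    (e : Fin N → ℝ) (he : e = restr T (U1.mulVec ze))
    (xstar : Fin n → ℝ) (y : Fin N → ℝ) (hy : y = H.mulVec xstar + e)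
    (zperp : Fin n → ℝ)
    (hmin : ∀ z : Fin n → ℝ, l1 (U1.mulVec zperp + e) ≤ l1 (U1.mulVec z + e))
    (xhat : Fin n → ℝ) (hxhat : M.mulVec xhat = M.mulVec xstar - zperp) :
    l1 (fun i => y i - H.mulVec xhat i) ≤
        Real.sqrt ((N : ℝ) - T.card) * l2 (restr Tᶜ (U1.mulVec ze)) ∧
      Real.sqrt ((N : ℝ) - T.card) * l2 (restr Tᶜ (U1.mulVec ze)) ≤ ε := by
  have hcard : ((N : ℝ) - T.card) = (Tᶜ.card : ℝ) := by
    have : Tᶜ.card = N - T.card := by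
      simp [Finset.card_compl]
    rw [this, Nat.cast_sub hTN.le]
  have hsqrtpos : 0 < Real.sqrt ((N : ℝ) - T.card) := by
    apply Real.sqrt_pos.mpr
    have : (T.card : ℝ) < N := by exact_mod_cast hTN
    linarith
  constructor
  · -- residual = U1 zperp + e
    have hres : (fun i => y i - H.mulVec xhat i) = U1.mulVec zperp + e := by
      funext i
      have : H.mulVec xhat = H.mulVec xstar - U1.mulVec zperp := by
        rw [hH, ← Matrix.mulVec_mulVec, ← Matrix.mulVec_mulVec, hxhat,
          Matrix.mulVec_sub]
      rw [hy, this]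
      simp [Pi.add_apply, Pi.sub_apply]
      ring
    rw [hres]
    -- witness z = -ze
    have hwit : U1.mulVec (-ze) + e = -(restr Tᶜ (U1.mulVec ze)) := by
      funext i
      simp only [Matrix.mulVec_neg, Pi.add_apply, Pi.neg_apply, he, restr]
      by_cases hi : i ∈ T <;> simp [hi]
    have h1 : l1 (U1.mulVec zperp + e) ≤ l1 (restr Tᶜ (U1.mulVec ze)) := by
      have := hmin (-ze)
      rw [hwit] at this
      simpa [l1, abs_neg] using this
    exact h1.trans (by rw [hcard]; exact l1_restr_le Tᶜ (U1.mulVec ze))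
  · calc Real.sqrt ((N : ℝ) - T.card) * l2 (restr Tᶜ (U1.mulVec ze))
        ≤ Real.sqrt ((N : ℝ) - T.card) * (ε / Real.sqrt ((N : ℝ) - T.card)) :=
          mul_le_mul_of_nonneg_left hfeas hsqrtpos.le
      _ = ε := by field_simp
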